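/- Let D ≥ 2 be an integer not divisible by 6 and let m ≥ 2 be a divisor of D. Then there exists a matrix A ∈ SL(2, ℤ/mℤ) such that A^D ≠ I and A^D ≠ −I. -/

import Mathlib

lemma aux_ne (m : ℕ) (hm : 2 ≤ m) (B : Matrix (Fin 2) (Fin 2) (ZMod m))
    (hB : B 0 1 = 1 ∨ B 0 1 = -1) : B ≠ 1 ∧ B ≠ -1 := by
  haveI : Fact (1 < m) := ⟨hm⟩
  have h0 : (1 : Matrix (Fin 2) (Fin 2) (ZMod m)) 0 1 = 0 := Matrix.one_apply_ne (by decide)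
  constructor <;> intro h <;> rw [h] at hB <;>
    simp [Matrix.one_apply_ne, Matrix.neg_apply, h0] at hB

theorem exists_sl2_power_not_central (D m : ℕ) (hD : 2 ≤ D) (h6 : ¬ (6 ∣ D))
    (hm : 2 ≤ m) (hmD : m ∣ D) :
    ∃ A : Matrix.SpecialLinearGroup (Fin 2) (ZMod m),
      ((A ^ D : Matrix.SpecialLinearGroup (Fin 2) (ZMod m)) : Matrix (Fin 2) (Fin 2) (ZMod m)) ≠ 1 ∧
      ((A ^ D : Matrix.SpecialLinearGroup (Fin 2) (ZMod m)) : Matrix (Fin 2) (Fin 2) (ZMod m)) ≠ -1 := by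
  by_cases h2 : 2 ∣ D
  · -- then 3 ∤ D; use order-3 element
    have h3 : ¬ (3 ∣ D) := fun h3 => h6 (Nat.Coprime.mul_dvd_of_dvd_of_dvd (by norm_num) h2 h3)
    set M : Matrix (Fin 2) (Fin 2) (ZMod m) := !![0, 1; -1, -1] with hM
    have hdet : M.det = 1 := by simp [hM, Matrix.det_fin_two_of]
    refine ⟨⟨M, hdet⟩, ?_⟩
    have hM3 : M ^ 3 = 1 := by
      have h2' : M ^ 2 = !![-1, -1; 1, 0] := by
        rw [pow_two, hM, Matrix.mul_fin_two]; norm_num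
      rw [pow_succ, h2', hM, Matrix.mul_fin_two]
      norm_num [Matrix.one_fin_two]
      rw [Matrix.one_fin_two]
    have hcoe : ((⟨M, hdet⟩ ^ D : Matrix.SpecialLinearGroup (Fin 2) (ZMod m)) :
        Matrix (Fin 2) (Fin 2) (ZMod m)) = M ^ D := by
      exact Matrix.SpecialLinearGroup.coe_pow ..
    rw [hcoe]
    have hMD : M ^ D = M ^ (D % 3) := by
      conv_lhs => rw [← Nat.div_add_mod D 3, pow_add, pow_mul, hM3, one_pow, one_mul]
    have hr : D % 3 = 1 ∨ D % 3 = 2 := by omega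
    apply aux_ne m hm
    rcases hr with hr | hr <;> rw [hMD, hr]
    · left; simp [hM]
    · have h2' : M ^ 2 = !![-1, -1; 1, 0] := by
        rw [pow_two, hM, Matrix.mul_fin_two]; norm_num
      right; rw [h2']; simp
  · -- D odd; use order-4 element
    set M : Matrix (Fin 2) (Fin 2) (ZMod m) := !![0, 1; -1, 0] with hM
    have hdet : M.det = 1 := by simp [hM, Matrix.det_fin_two_of]
    refine ⟨⟨M, hdet⟩, ?_⟩
    have h2' : M ^ 2 = -1 := by
      rw [pow_two, hM, Matrix.mul_fin_two]
      norm_num [Matrix.one_fin_two]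
      ext i j; fin_cases i <;> fin_cases j <;> simp [Matrix.one_fin_two]
    have hM4 : M ^ 4 = 1 := by
      have : M ^ 4 = (M ^ 2) ^ 2 := by rw [← pow_mul]
      rw [this, h2']; simp
    have hcoe : ((⟨M, hdet⟩ ^ D : Matrix.SpecialLinearGroup (Fin 2) (ZMod m)) :
        Matrix (Fin 2) (Fin 2) (ZMod m)) = M ^ D := by
      exact Matrix.SpecialLinearGroup.coe_pow ..
    rw [hcoe]
    have hMD : M ^ D = M ^ (D % 4) := by
      conv_lhs => rw [← Nat.div_add_mod D 4, pow_add, pow_mul, hM4, one_pow, one_mul]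
    have hr : D % 4 = 1 ∨ D % 4 = 3 := by omega
    apply aux_ne m hm
    rcases hr with hr | hr <;> rw [hMD, hr]
    · left; simp [hM]
    · right
      have : M ^ 3 = -M := by rw [pow_succ, h2']; simp
      rw [this]; simp [hM]
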